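/- For any finite 3-uniform hypergraph G, the 2-covering number satisfies τ^{(2)}(G) ≤ |D(G)|/2, where D(G) is the set of pairs of vertices contained in at least one edge of G. -/

import Mathlib

variable {V : Type*} [DecidableEq V]

/-- `M` is an `m`-matching of `G`: a set of edges pairwise intersecting in fewer
than `m` vertices. -/
def IsMMatching (G : Finset (Finset V)) (m : ℕ) (M : Finset (Finset V)) : Prop :=
  M ⊆ G ∧ ∀ e ∈ M, ∀ f ∈ M, e ≠ f → (e ∩ f).card < m

/-- `C` is an `m`-cover of `G`: a family of `m`-element vertex sets such that every
edge of `G` contains a member of `C`. -/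
def IsMCover (G : Finset (Finset V)) (m : ℕ) (C : Finset (Finset V)) : Prop :=
  (∀ s ∈ C, s.card = m) ∧ ∀ e ∈ G, ∃ s ∈ C, s ⊆ e

/-- The `m`-matching number `ν^{(m)}(G)`. -/
noncomputable def nuM (G : Finset (Finset V)) (m : ℕ) : ℕ :=
  sSup {k | ∃ M, IsMMatching G m M ∧ M.card = k}

/-- The `m`-covering number `τ^{(m)}(G)`. -/
noncomputable def tauM (G : Finset (Finset V)) (m : ℕ) : ℕ :=
  sInf {k | ∃ C, IsMCover G m C ∧ C.card = k}

/-- `D(G)` (with parameter `m`): the `m`-element vertex subsets contained in at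
least one edge of `G`. -/
def Dset (G : Finset (Finset V)) (m : ℕ) : Finset (Finset V) :=
  G.biUnion fun e => e.powersetCard m


lemma pair_count (W : Finset V) (a b : V) (hab : a ≠ b) (haW : a ∈ W) (hbW : b ∈ W) :
    2 * ((W.powerset.filter (fun S => ({a, b} : Finset V) ⊆ S ∨ Disjoint ({a, b} : Finset V) S)).card)
      = 2 ^ W.card := by
  have hchar : ∀ S : Finset V,
      (({a, b} : Finset V) ⊆ S ∨ Disjoint ({a, b} : Finset V) S) ↔ (a ∈ S ↔ b ∈ S) := by
    intro S
    simp [Finset.insert_subset_iff, Finset.disjoint_left]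
    tauto
  have hmem : ∀ S : Finset V, S ⊆ W → ((({a, b} : Finset V) ⊆ S ∨ Disjoint ({a, b} : Finset V) S) ↔
      ¬(({a, b} : Finset V) ⊆ symmDiff S {a} ∨ Disjoint ({a, b} : Finset V) (symmDiff S {a}))) := by
    intro S _
    rw [hchar, hchar]
    have ha : a ∈ symmDiff S {a} ↔ a ∉ S := by simp [Finset.mem_symmDiff]
    have hb : b ∈ symmDiff S {a} ↔ b ∈ S := by
      simp only [Finset.mem_symmDiff, Finset.mem_singleton]
      constructor
      · rintro (⟨h,_⟩|⟨h,_⟩) <;> [exact h; exact absurd h hab.symm]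
      · intro h; exact Or.inl ⟨h, hab.symm⟩
    rw [ha, hb]
    tauto
  have hsub : ∀ S : Finset V, S ⊆ W → symmDiff S {a} ⊆ W := by
    intro S hS
    intro x hx
    rw [Finset.mem_symmDiff] at hx
    rcases hx with ⟨h,_⟩|⟨h,_⟩
    · exact hS h
    · simp only [Finset.mem_singleton] at h; exact h ▸ haW
  have hinv : ∀ S : Finset V, symmDiff (symmDiff S {a}) {a} = S := fun S =>
    symmDiff_symmDiff_cancel_right {a} S
  have hcard : (W.powerset.filter (fun S => ({a, b} : Finset V) ⊆ S ∨ Disjoint ({a, b} : Finset V) S)).card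
      = (W.powerset.filter (fun S => ¬(({a, b} : Finset V) ⊆ S ∨ Disjoint ({a, b} : Finset V) S))).card := by
    refine Finset.card_bij' (fun S _ => symmDiff S {a}) (fun S _ => symmDiff S {a}) ?_ ?_ ?_ ?_
    · intro S hS
      simp only [Finset.mem_filter, Finset.mem_powerset] at hS ⊢
      exact ⟨hsub S hS.1, ((hmem S hS.1).mp hS.2)⟩
    · intro S hS
      simp only [Finset.mem_filter, Finset.mem_powerset] at hS ⊢
      refine ⟨hsub S hS.1, ?_⟩
      exact (hmem _ (hsub S hS.1)).mpr (by rw [hinv S]; exact hS.2)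
    · intro S _; exact hinv S
    · intro S _; exact hinv S
  have := Finset.card_filter_add_card_filter_not
    (s := W.powerset) (p := fun S => ({a, b} : Finset V) ⊆ S ∨ Disjoint ({a, b} : Finset V) S)
  rw [Finset.card_powerset] at this
  omega

theorem stmt4 (G : Finset (Finset V)) (hG : ∀ e ∈ G, e.card = 3) :
    (tauM G 2 : ℝ) ≤ ((Dset G 2).card : ℝ) / 2 := by
  classical
  set W : Finset V := G.biUnion id with hW
  set D := Dset G 2 with hD
  have hDmem : ∀ p ∈ D, p.card = 2 ∧ p ⊆ W := by
    intro p hp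
    rw [hD, Dset, Finset.mem_biUnion] at hp
    obtain ⟨e, he, hpe⟩ := hp
    rw [Finset.mem_powersetCard] at hpe
    refine ⟨hpe.2, hpe.1.trans ?_⟩
    intro x hx
    exact Finset.mem_biUnion.mpr ⟨e, he, hx⟩
  -- double counting
  have key : 2 * ∑ S ∈ W.powerset, (D.filter (fun p => p ⊆ S ∨ Disjoint p S)).card
      = D.card * 2 ^ W.card := by
    have h1 : ∑ S ∈ W.powerset, (D.filter (fun p => p ⊆ S ∨ Disjoint p S)).card
        = ∑ p ∈ D, (W.powerset.filter (fun S => p ⊆ S ∨ Disjoint p S)).card := by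
      simp only [Finset.card_filter]
      rw [Finset.sum_comm]
    rw [h1, Finset.mul_sum]
    rw [Finset.sum_congr rfl (fun p hp => ?_), Finset.sum_const, smul_eq_mul]
    obtain ⟨hp2, hpW⟩ := hDmem p hp
    obtain ⟨a, b, hab, rfl⟩ := Finset.card_eq_two.mp hp2
    exact pair_count W a b hab (hpW (by simp)) (hpW (by simp))
  -- averaging: find a good S
  have havg : ∃ S ∈ W.powerset, 2 * (D.filter (fun p => p ⊆ S ∨ Disjoint p S)).card ≤ D.card := by
    by_contra h
    push_neg at h
    have hsum : ∑ S ∈ W.powerset, 2 * (D.filter (fun p => p ⊆ S ∨ Disjoint p S)).card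
        ≥ ∑ _S ∈ W.powerset, (D.card + 1) :=
      Finset.sum_le_sum fun S hS => h S hS
    rw [Finset.sum_const, smul_eq_mul, Finset.card_powerset, ← Finset.mul_sum, key] at hsum
    have hpos : 0 < 2 ^ W.card := pow_pos (by norm_num) _
    nlinarith
  obtain ⟨S, _, hSgood⟩ := havg
  set C := D.filter (fun p => p ⊆ S ∨ Disjoint p S) with hC
  -- C is a 2-cover
  have hcover : IsMCover G 2 C := by
    constructor
    · intro s hs
      exact (hDmem s (Finset.mem_filter.mp hs).1).1
    · intro e he
      have he3 : e.card = 3 := hG e he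
      have hsplit : (e ∩ S).card + (e \ S).card = 3 := by
        rw [Finset.card_inter_add_card_sdiff, he3]
      have hbig : 2 ≤ (e ∩ S).card ∨ 2 ≤ (e \ S).card := by omega
      rcases hbig with hbig | hbig
      · obtain ⟨p, hpsub, hp2⟩ := Finset.exists_subset_card_eq hbig
        refine ⟨p, ?_, hpsub.trans Finset.inter_subset_left⟩
        rw [hC, Finset.mem_filter]
        refine ⟨?_, Or.inl (hpsub.trans Finset.inter_subset_right)⟩
        rw [hD, Dset, Finset.mem_biUnion]
        exact ⟨e, he, Finset.mem_powersetCard.mpr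
          ⟨hpsub.trans Finset.inter_subset_left, hp2⟩⟩
      · obtain ⟨p, hpsub, hp2⟩ := Finset.exists_subset_card_eq hbig
        refine ⟨p, ?_, hpsub.trans (Finset.sdiff_subset)⟩
        rw [hC, Finset.mem_filter]
        refine ⟨?_, Or.inr (Finset.disjoint_left.mpr fun x hx =>
          (Finset.mem_sdiff.mp (hpsub hx)).2)⟩
        rw [hD, Dset, Finset.mem_biUnion]
        exact ⟨e, he, Finset.mem_powersetCard.mpr
          ⟨hpsub.trans (Finset.sdiff_subset), hp2⟩⟩
  have htau : tauM G 2 ≤ C.card := Nat.sInf_le ⟨C, hcover, rfl⟩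
  have h2 : 2 * C.card ≤ D.card := hSgood
  have : (tauM G 2 : ℝ) ≤ (C.card : ℝ) := by exact_mod_cast htau
  refine this.trans ?_
  rw [le_div_iff₀ (by norm_num : (0:ℝ) < 2)]
  have h2' : (C.card : ℝ) * 2 ≤ (D.card : ℝ) := by exact_mod_cast (by omega : C.card * 2 ≤ D.card)
  exact h2'
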